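/- (Lemma 3.1.) If E[V − τ] < 0, then the stationary equation Y ∘ θ = ψ(Y, ·) P-a.s. possesses a P-a.s. finite nonnegative measurable solution, unique up to P-a.s. equality, and this solution is given by M_∞ = max( 0, sup_{j≥1} ( σ∘θ^{-j} + D∘θ^{-j} + Σ_{i=1}^{j} V∘θ^{-i} − Σ_{i=1}^{j} τ∘θ^{-i} ) ). -/

import Mathlib

open MeasureTheory Filter

noncomputable section

variable {Ω : Type*}

/-- ψ(y, ω) = max( max( y + V ω, σ ω + D ω + V ω ) − τ ω, 0 ). -/
def psi (σ D V τ : Ω → ℝ) (y : ℝ) (ω : Ω) : ℝ :=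
  max (max (y + V ω) (σ ω + D ω + V ω) - τ ω) 0

/-- S_j(ω) = σ(θ^{-j}ω) + D(θ^{-j}ω) + Σ_{i=1}^{j} V(θ^{-i}ω) − Σ_{i=1}^{j} τ(θ^{-i}ω),
where `θi` denotes the inverse of `θ`. -/
def Sj (θi : Ω → Ω) (σ D V τ : Ω → ℝ) (j : ℕ) (ω : Ω) : ℝ :=
  σ (θi^[j] ω) + D (θi^[j] ω)
    + ∑ i ∈ Finset.Icc 1 j, V (θi^[i] ω)
    - ∑ i ∈ Finset.Icc 1 j, τ (θi^[i] ω)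

/-- Loynes sequence: M_0 = 0 and M_n = max(0, max_{1 ≤ j ≤ n} S_j). -/
def Mn (θi : Ω → Ω) (σ D V τ : Ω → ℝ) (n : ℕ) (ω : Ω) : ℝ :=
  (Finset.Icc 1 n).fold max 0 (fun j => Sj θi σ D V τ j ω)

/-- M_∞ = max(0, sup_{j ≥ 1} S_j) ∈ [0,∞]. -/
def Minf (θi : Ω → Ω) (σ D V τ : Ω → ℝ) (ω : Ω) : EReal :=
  max 0 (⨆ j : ℕ, ((Sj θi σ D V τ (j + 1) ω : ℝ) : EReal))

namespace LoynesAux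

/-! ### Elementary facts about real suprema -/

lemma bdd_shift {f : ℕ → ℝ} (hb : BddAbove (Set.range f)) :
    BddAbove (Set.range fun n => f (n + 1)) := by
  obtain ⟨C, hC⟩ := hb
  exact ⟨C, by rintro _ ⟨n, rfl⟩; exact hC ⟨n + 1, rfl⟩⟩

lemma bdd_of_shift {f : ℕ → ℝ} (hb : BddAbove (Set.range fun n => f (n + 1))) :
    BddAbove (Set.range f) := by
  obtain ⟨C, hC⟩ := hb
  refine ⟨max C (f 0), ?_⟩
  rintro _ ⟨n, rfl⟩
  cases n with
  | zero => exact le_max_right _ _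
  | succ m => exact le_trans (hC ⟨m, rfl⟩) (le_max_left _ _)

lemma ciSup_succ {f : ℕ → ℝ} (hb : BddAbove (Set.range f)) :
    (⨆ n, f n) = max (f 0) (⨆ n, f (n + 1)) := by
  apply le_antisymm
  · refine ciSup_le fun n => ?_
    cases n with
    | zero => exact le_max_left _ _
    | succ m => exact le_trans (le_ciSup (bdd_shift hb) m) (le_max_right _ _)
  · exact max_le (le_ciSup hb 0) (ciSup_le fun n => le_ciSup hb (n + 1))

lemma ciSup_add_const {f : ℕ → ℝ} (hb : BddAbove (Set.range f)) (c : ℝ) :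
    (⨆ n, f n) + c = ⨆ n, (f n + c) := by
  have hb2 : BddAbove (Set.range fun n => f n + c) := by
    obtain ⟨C, hC⟩ := hb
    exact ⟨C + c, by rintro _ ⟨n, rfl⟩; exact add_le_add_left (hC ⟨n, rfl⟩) c⟩
  apply le_antisymm
  · have h1 : (⨆ n, f n) ≤ (⨆ n, f n + c) - c :=
      ciSup_le fun n => le_sub_iff_add_le.mpr (le_ciSup hb2 n)
    linarith
  · exact ciSup_le fun n => add_le_add_left (le_ciSup hb n) c

lemma coe_ciSup {f : ℕ → ℝ} (hb : BddAbove (Set.range f)) :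
    (⨆ n, ((f n : ℝ) : EReal)) = (((⨆ n, f n : ℝ)) : EReal) := by
  apply le_antisymm
  · exact iSup_le fun n => EReal.coe_le_coe_iff.2 (le_ciSup hb n)
  · set S := ⨆ n, ((f n : ℝ) : EReal) with hS
    have hbot : ((f 0 : ℝ) : EReal) ≤ S := le_iSup (fun n => ((f n : ℝ) : EReal)) 0
    rcases eq_or_ne S ⊤ with h | hne
    · rw [h]; exact le_top
    · have hnb : S ≠ ⊥ := ne_bot_of_le_ne_bot (EReal.coe_ne_bot _) hbot
      have hST : (S.toReal : EReal) = S := EReal.coe_toReal hne hnb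
      have hle : ∀ n, f n ≤ S.toReal := by
        intro n
        have : ((f n : ℝ) : EReal) ≤ S := le_iSup (fun n => ((f n : ℝ) : EReal)) n
        rw [← hST] at this
        exact EReal.coe_le_coe_iff.1 this
      calc (((⨆ n, f n : ℝ)) : EReal) ≤ (S.toReal : EReal) :=
            EReal.coe_le_coe_iff.2 (ciSup_le hle)
        _ = S := hST

lemma max_alg {g b r : ℝ} (hgb : g ≤ b) :
    max (max 0 r + g) (max b 0) = max 0 (max b (r + g)) := by
  rw [← max_add_add_right]
  rcases le_total g (r + g) with h1 | h1 <;>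
    rcases le_total b (r + g) with h2 | h2 <;>
    rcases le_total (0:ℝ) b with h3 | h3 <;>
    rcases le_total (0:ℝ) (r+g) with h4 | h4 <;>
    simp [max_eq_left, max_eq_right, max_def] <;> split_ifs <;> linarith

lemma ereal_max_zero_coe (r : ℝ) :
    max (0 : EReal) ((r : ℝ) : EReal) = ((max 0 r : ℝ) : EReal) := by
  rcases le_total (0:ℝ) r with h | h
  · rw [max_eq_right h, max_eq_right]
    rw [← EReal.coe_zero]
    exact EReal.coe_le_coe_iff.2 h
  · rw [max_eq_left h, max_eq_left, EReal.coe_zero]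
    rw [← EReal.coe_zero]
    exact EReal.coe_le_coe_iff.2 h

lemma ereal_toReal_nonneg {x : EReal} (hx : 0 ≤ x) : 0 ≤ x.toReal := by
  rcases eq_or_ne x ⊤ with rfl | h1
  · simp
  · rcases eq_or_ne x ⊥ with rfl | h2
    · exact absurd hx (by simp)
    · rw [← EReal.coe_toReal h1 h2, ← EReal.coe_zero, EReal.coe_le_coe_iff] at hx
      exact hx

/-! ### The backward/forward random walks -/

def auxS (T : Ω → Ω) (g : Ω → ℝ) (n : ℕ) (ω : Ω) : ℝ :=
  ∑ i ∈ Finset.range n, g (T^[i] ω)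

def auxM (T : Ω → Ω) (g : Ω → ℝ) : ℕ → Ω → ℝ
  | 0 => fun _ => 0
  | (n + 1) => fun ω => max (auxM T g n ω) (auxS T g (n + 1) ω)

variable {T : Ω → Ω} {g : Ω → ℝ}

lemma auxS_zero (ω : Ω) : auxS T g 0 ω = 0 := by simp [auxS]

lemma auxS_succ (n : ℕ) (ω : Ω) : auxS T g (n + 1) ω = g ω + auxS T g n (T ω) := by
  unfold auxS
  rw [Finset.sum_range_succ']
  simp only [Function.iterate_zero_apply, Function.iterate_succ_apply]
  rw [add_comm]

lemma auxM_nonneg (N : ℕ) (ω : Ω) : 0 ≤ auxM T g N ω := by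
  induction N with
  | zero => simp [auxM]
  | succ n ih => exact le_trans ih (le_max_left _ _)

lemma auxM_le {N : ℕ} {c : ℝ} {ω : Ω} (h : ∀ n ≤ N, auxS T g n ω ≤ c) :
    auxM T g N ω ≤ c := by
  induction N with
  | zero => simpa [auxS, auxM] using h 0 le_rfl
  | succ n ih =>
      exact max_le (ih fun m hm => h m (hm.trans (Nat.le_succ n))) (h (n + 1) le_rfl)

lemma le_auxM {N n : ℕ} (hn : n ≤ N) (ω : Ω) : auxS T g n ω ≤ auxM T g N ω := by
  induction N with
  | zero =>
      obtain rfl : n = 0 := Nat.le_zero.1 hn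
      simp [auxS, auxM]
  | succ m ih =>
      rcases Nat.lt_or_ge n (m + 1) with h | h
      · exact le_trans (ih (Nat.lt_succ_iff.1 h)) (le_max_left _ _)
      · obtain rfl : n = m + 1 := le_antisymm hn h
        exact le_max_right _ _

lemma auxM_mono (N : ℕ) (ω : Ω) : auxM T g N ω ≤ auxM T g (N + 1) ω := le_max_left _ _

lemma auxM_key (N : ℕ) (ω : Ω) :
    auxM T g (N + 1) ω ≤ max 0 (g ω + auxM T g N (T ω)) := by
  refine auxM_le fun n hn => ?_
  cases n with
  | zero => simpa [auxS] using le_max_left (0:ℝ) _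
  | succ m =>
      have hm : m ≤ N := Nat.succ_le_succ_iff.1 hn
      calc auxS T g (m + 1) ω = g ω + auxS T g m (T ω) := auxS_succ m ω
        _ ≤ g ω + auxM T g N (T ω) := by
            exact add_le_add_right (le_auxM hm (T ω)) _
        _ ≤ max 0 (g ω + auxM T g N (T ω)) := le_max_right _ _

variable [MeasurableSpace Ω] {P : Measure Ω} [IsProbabilityMeasure P]

lemma auxS_meas (hT : Measurable T) (hg : Measurable g) (n : ℕ) : Measurable (auxS T g n) :=
  Finset.measurable_sum _ fun i _ => hg.comp (hT.iterate i)

omit [IsProbabilityMeasure P] in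
lemma comp_iterate_integrable (hT : MeasurePreserving T P P) (hg : Integrable g P) (i : ℕ) :
    Integrable (fun ω => g (T^[i] ω)) P := by
  have h := hT.iterate i
  have hg' : Integrable g (Measure.map T^[i] P) := by rwa [h.map_eq]
  exact hg'.comp_measurable h.measurable

omit [IsProbabilityMeasure P] in
lemma auxS_integrable (hT : MeasurePreserving T P P) (hg : Integrable g P) (n : ℕ) :
    Integrable (auxS T g n) P := by
  unfold auxS
  exact integrable_finset_sum _ fun i _ => comp_iterate_integrable hT hg i

lemma auxM_meas (hT : Measurable T) (hg : Measurable g) (N : ℕ) : Measurable (auxM T g N) := by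
  induction N with
  | zero => exact measurable_const
  | succ n ih => exact ih.max (auxS_meas hT hg (n + 1))

lemma auxM_integrable (hT : MeasurePreserving T P P) (hgi : Integrable g P) (N : ℕ) :
    Integrable (auxM T g N) P := by
  induction N with
  | zero => exact integrable_const 0
  | succ n ih => exact ih.sup (auxS_integrable hT hgi (n + 1))

/-- The key "maximal ergodic"-style lemma: a stationary ergodic random walk with negative
drift is a.s. bounded above. -/
theorem drift_bddAbove (hT : MeasurePreserving T P P) (hTe : PreErgodic T P)
    (hgm : Measurable g) (hgi : Integrable g P) (hg : ∫ ω, g ω ∂P < 0) :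
    ∀ᵐ ω ∂P, BddAbove (Set.range fun n : ℕ => auxS T g n ω) := by
  classical
  set B : Set Ω := ⋂ C : ℕ, ⋃ n : ℕ, {ω | (C : ℝ) < auxS T g n ω} with hB
  have hBmeas : MeasurableSet B :=
    MeasurableSet.iInter fun C => MeasurableSet.iUnion fun n =>
      measurableSet_lt measurable_const (auxS_meas hT.measurable hgm n)
  have hBinv : T ⁻¹' B = B := by
    ext ω
    simp only [hB, Set.mem_preimage, Set.mem_iInter, Set.mem_iUnion, Set.mem_setOf_eq]
    constructor
    · intro h C
      obtain ⟨n, hn⟩ := h ⌈(C : ℝ) - g ω⌉₊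
      have hceil : (C : ℝ) - g ω ≤ (⌈(C : ℝ) - g ω⌉₊ : ℝ) := Nat.le_ceil _
      exact ⟨n + 1, by rw [auxS_succ]; linarith⟩
    · intro h C
      obtain ⟨m, hm⟩ := h ⌈(C : ℝ) + g ω⌉₊
      have hceil : (C : ℝ) + g ω ≤ (⌈(C : ℝ) + g ω⌉₊ : ℝ) := Nat.le_ceil _
      cases m with
      | zero =>
          exfalso
          rw [auxS_zero] at hm
          have : (0 : ℝ) ≤ (⌈(C : ℝ) + g ω⌉₊ : ℝ) := Nat.cast_nonneg _
          linarith
      | succ n =>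
          rw [auxS_succ] at hm
          exact ⟨n, by linarith⟩
  rcases hTe.measure_self_or_compl_eq_zero hBmeas hBinv with h0 | h1
  · have hae : ∀ᵐ ω ∂P, ω ∉ B := by
      rw [ae_iff]
      simpa [not_not] using h0
    filter_upwards [hae] with ω hω
    simp only [hB, Set.mem_iInter, Set.mem_iUnion, Set.mem_setOf_eq, not_forall, not_exists,
      not_lt] at hω
    obtain ⟨C, hC⟩ := hω
    exact ⟨(C : ℝ), by rintro _ ⟨n, rfl⟩; exact hC n⟩
  · exfalso
    have hBae : ∀ᵐ ω ∂P, ω ∈ B := by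
      rw [ae_iff]
      exact h1
    set A : ℕ → Set Ω := fun N => {ω | 0 < auxM T g (N + 1) ω} with hA
    have hAmeas : ∀ N, MeasurableSet (A N) := fun N =>
      measurableSet_lt measurable_const (auxM_meas hT.measurable hgm (N + 1))
    have hMiT : ∀ N, Integrable (fun ω => auxM T g N (T ω)) P := by
      intro N
      have h1' : Integrable (auxM T g N) (Measure.map T P) := by
        rw [hT.map_eq]; exact auxM_integrable hT hgi N
      exact h1'.comp_measurable hT.measurable
    have hpt : ∀ N ω, auxM T g (N + 1) ω - auxM T g (N + 1) (T ω) ≤ (A N).indicator g ω := by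
      intro N ω
      by_cases h : ω ∈ A N
      · rw [Set.indicator_of_mem h]
        have h2 := auxM_key (T := T) (g := g) N ω
        have h3 : auxM T g (N + 1) ω ≤ g ω + auxM T g N (T ω) := by
          rcases le_or_gt (g ω + auxM T g N (T ω)) 0 with hc | hc
          · rw [max_eq_left hc] at h2
            exact absurd (lt_of_lt_of_le h h2) (lt_irrefl 0)
          · rwa [max_eq_right hc.le] at h2
        have h4 : auxM T g N (T ω) ≤ auxM T g (N + 1) (T ω) := auxM_mono N (T ω)
        linarith
      · rw [Set.indicator_of_notMem h]
        have h5 : auxM T g (N + 1) ω ≤ 0 := not_lt.1 h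
        have h6 : 0 ≤ auxM T g (N + 1) (T ω) := auxM_nonneg _ _
        linarith
    have hintT : ∀ N, ∫ ω, auxM T g N (T ω) ∂P = ∫ ω, auxM T g N ω ∂P := by
      intro N
      conv_rhs => rw [← hT.map_eq]
      rw [integral_map hT.measurable.aemeasurable
        (auxM_meas hT.measurable hgm N).aestronglyMeasurable]
    have hApos : ∀ N, 0 ≤ ∫ ω, (A N).indicator g ω ∂P := by
      intro N
      have hdiff : ∫ ω, (auxM T g (N + 1) ω - auxM T g (N + 1) (T ω)) ∂P = 0 := by
        rw [integral_sub (auxM_integrable hT hgi (N + 1)) (hMiT (N + 1)), hintT (N + 1),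
          sub_self]
      calc (0:ℝ) = ∫ ω, (auxM T g (N + 1) ω - auxM T g (N + 1) (T ω)) ∂P := hdiff.symm
        _ ≤ ∫ ω, (A N).indicator g ω ∂P := by
            refine integral_mono ((auxM_integrable hT hgi (N + 1)).sub (hMiT (N + 1)))
              (hgi.indicator (hAmeas N)) ?_
            intro ω
            exact hpt N ω
    have htend : ∀ᵐ ω ∂P, Tendsto (fun N => (A N).indicator g ω) atTop (nhds (g ω)) := by
      filter_upwards [hBae] with ω hω
      have h0' : ∃ n, (0 : ℝ) < auxS T g n ω := by
        have := Set.mem_iInter.1 hω 0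
        obtain ⟨n, hn⟩ := Set.mem_iUnion.1 this
        exact ⟨n, by simpa using hn⟩
      obtain ⟨n, hn⟩ := h0'
      have hev : ∀ᶠ N in atTop, (A N).indicator g ω = g ω := by
        filter_upwards [eventually_ge_atTop n] with N hN
        have hmem : ω ∈ A N := by
          have hle : auxS T g n ω ≤ auxM T g (N + 1) ω := le_auxM (hN.trans (Nat.le_succ N)) ω
          exact Set.mem_setOf_eq ▸ lt_of_lt_of_le hn hle
        rw [Set.indicator_of_mem hmem]
      exact Tendsto.congr' (hev.mono fun N h => h.symm) tendsto_const_nhds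
    have hTi : Tendsto (fun N => ∫ ω, (A N).indicator g ω ∂P) atTop (nhds (∫ ω, g ω ∂P)) := by
      refine tendsto_integral_of_dominated_convergence (fun ω => |g ω|)
        (fun N => ((hgm.indicator (hAmeas N)).aestronglyMeasurable)) hgi.abs ?_ htend
      intro N
      filter_upwards with ω
      calc ‖(A N).indicator g ω‖ ≤ ‖g ω‖ := norm_indicator_le_norm_self _ _
        _ = |g ω| := Real.norm_eq_abs _
    have : 0 ≤ ∫ ω, g ω ∂P := ge_of_tendsto hTi (Eventually.of_forall hApos)
    linarith

/-- For a measure-preserving map, an a.e. sub-invariant function is a.e. invariant. -/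
theorem ae_comp_eq_of_ae_comp_le {T : Ω → Ω} (hT : MeasurePreserving T P P)
    {f : Ω → ℝ} (hf : Measurable f) (h : ∀ᵐ ω ∂P, f (T ω) ≤ f ω) :
    ∀ᵐ ω ∂P, f (T ω) = f ω := by
  have hq : ∀ q : ℚ, P {ω | f (T ω) ≤ q ∧ (q : ℝ) < f ω} = 0 := by
    intro q
    set A : Set Ω := {ω | (q : ℝ) < f ω} with hA
    set B : Set Ω := T ⁻¹' A with hB
    have hAmeas : MeasurableSet A := measurableSet_lt measurable_const hf
    have hBmeas : MeasurableSet B := hAmeas.preimage hT.measurable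
    have hpre : P B = P A := hT.measure_preimage hAmeas.nullMeasurableSet
    have hdiff1 : P (B \ A) = 0 := by
      have hsub : ∀ᵐ ω ∂P, ω ∉ B \ A := by
        filter_upwards [h] with ω hω hmem
        exact hmem.2 (lt_of_lt_of_le hmem.1 hω)
      simp only [ae_iff, not_not] at hsub
      exact hsub
    have h1 : P (A ∪ B) = P A + P (B \ A) := by
      rw [← Set.union_diff_self, measure_union disjoint_sdiff_self_right (hBmeas.diff hAmeas)]
    have h2 : P (A ∪ B) = P B + P (A \ B) := by
      rw [Set.union_comm, ← Set.union_diff_self,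
        measure_union disjoint_sdiff_self_right (hAmeas.diff hBmeas)]
    have h3 : P A + P (A \ B) = P A + 0 := by
      rw [add_zero, ← hpre, ← h2, h1, hdiff1, add_zero, hpre]
    have h4 : P (A \ B) = 0 := (ENNReal.add_right_inj (measure_ne_top P A)).1 h3
    refine measure_mono_null ?_ h4
    intro ω hω
    exact ⟨hω.2, fun hc => absurd hc (not_lt.2 hω.1)⟩
  have hlt : P {ω | f (T ω) < f ω} = 0 := by
    refine measure_mono_null ?_ (measure_iUnion_null fun q : ℚ => hq q)
    intro ω hω
    simp only [Set.mem_setOf_eq] at hω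
    obtain ⟨q, hq1, hq2⟩ := exists_rat_btwn hω
    exact Set.mem_iUnion.2 ⟨q, hq1.le, hq2⟩
  have hlt' : ∀ᵐ ω ∂P, ¬ f (T ω) < f ω := by
    rw [ae_iff]
    simpa [not_not] using hlt
  filter_upwards [h, hlt'] with ω h1 h2
  exact le_antisymm h1 (not_lt.1 h2)

/-! ### Structure of `Sj`, `Mn`, `psi` -/

variable (σ D V τ : Ω → ℝ) (θ : Ω ≃ᵐ Ω)

/-- the increment process for the backward walk -/
def qf [MeasurableSpace Ω] (θ : Ω ≃ᵐ Ω) (σ D V τ : Ω → ℝ) (ω : Ω) : ℝ :=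
  (σ (θ.symm ω) + D (θ.symm ω)) - (σ ω + D ω) + (V (θ.symm ω) - τ (θ.symm ω))

lemma Sj_zero (ω : Ω) : Sj (⇑θ.symm) σ D V τ 0 ω = σ ω + D ω := by
  simp [Sj]

lemma Sj_succ (j : ℕ) (ω : Ω) :
    Sj (⇑θ.symm) σ D V τ (j + 1) ω
      = Sj (⇑θ.symm) σ D V τ j ω + qf θ σ D V τ (θ.symm^[j] ω) := by
  unfold Sj qf
  rw [Finset.sum_Icc_succ_top (Nat.le_add_left 1 j), Finset.sum_Icc_succ_top (Nat.le_add_left 1 j)]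
  rw [Function.iterate_succ_apply']
  ring

lemma Sj_q (j : ℕ) (ω : Ω) :
    Sj (⇑θ.symm) σ D V τ j ω = (σ ω + D ω) + auxS (⇑θ.symm) (qf θ σ D V τ) j ω := by
  induction j with
  | zero => simp [Sj_zero, auxS]
  | succ n ih =>
      rw [Sj_succ, ih]
      unfold auxS
      rw [Finset.sum_range_succ]
      ring

lemma Sj_shift (j : ℕ) (ω : Ω) :
    Sj (⇑θ.symm) σ D V τ (j + 1) (θ ω)
      = Sj (⇑θ.symm) σ D V τ j ω + (V ω - τ ω) := by
  rw [Sj_q, Sj_q, auxS_succ]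
  simp only [MeasurableEquiv.symm_apply_apply]
  unfold qf
  simp only [MeasurableEquiv.symm_apply_apply]
  ring

lemma Sj_meas (hσm : Measurable σ) (hDm : Measurable D) (hVm : Measurable V)
    (hτm : Measurable τ) {θi : Ω → Ω} (hθi : Measurable θi) (j : ℕ) :
    Measurable (Sj θi σ D V τ j) := by
  unfold Sj
  exact (((hσm.comp (hθi.iterate j)).add (hDm.comp (hθi.iterate j))).add
    (Finset.measurable_sum _ fun i _ => hVm.comp (hθi.iterate i))).sub
    (Finset.measurable_sum _ fun i _ => hτm.comp (hθi.iterate i))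

lemma psi_eq (y : ℝ) (ω : Ω) :
    psi σ D V τ y ω
      = max (y + (V ω - τ ω)) (max (σ ω + D ω + V ω - τ ω) 0) := by
  unfold psi
  rw [← max_sub_sub_right, max_assoc, add_sub_assoc]

lemma psi_mono {y y' : ℝ} (hy : y ≤ y') (ω : Ω) :
    psi σ D V τ y ω ≤ psi σ D V τ y' ω := by
  rw [psi_eq, psi_eq]
  exact max_le_max (by linarith) le_rfl

lemma psi_add_le {w : ℝ} (hw : 0 ≤ w) (y : ℝ) (ω : Ω) :
    psi σ D V τ (y + w) ω ≤ psi σ D V τ y ω + w := by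
  rw [psi_eq, psi_eq]
  refine max_le (by refine le_trans ?_ (add_le_add_left (le_max_left _ _) w); linarith)
    (le_trans (le_max_right _ _) (le_add_of_nonneg_right hw))

lemma psi_max (a b : ℝ) (ω : Ω) :
    psi σ D V τ (max a b) ω = max (psi σ D V τ a ω) (psi σ D V τ b ω) := by
  rw [psi_eq, psi_eq, psi_eq]
  rw [← max_add_add_right]
  rw [show max (max (a + (V ω - τ ω)) (b + (V ω - τ ω)))
        (max (σ ω + D ω + V ω - τ ω) 0)
      = max (max (a + (V ω - τ ω)) (b + (V ω - τ ω)))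
        (max (max (σ ω + D ω + V ω - τ ω) 0) (max (σ ω + D ω + V ω - τ ω) 0)) by rw [max_self]]
  exact max_max_max_comm _ _ _ _

lemma psi_ge (y : ℝ) (ω : Ω) :
    max (σ ω + D ω + V ω - τ ω) 0 ≤ psi σ D V τ y ω := by
  rw [psi_eq]; exact le_max_right _ _

lemma Mn_zero (θi : Ω → Ω) (ω : Ω) : Mn θi σ D V τ 0 ω = 0 := by
  simp [Mn]

lemma Mn_succ (θi : Ω → Ω) (n : ℕ) (ω : Ω) :
    Mn θi σ D V τ (n + 1) ω = max (Sj θi σ D V τ (n + 1) ω) (Mn θi σ D V τ n ω) := by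
  unfold Mn
  rw [show Finset.Icc 1 (n + 1) = insert (n + 1) (Finset.Icc 1 n) by
      rw [← Finset.Ico_add_one_right_eq_Icc]
      exact (Nat.Ico_succ_right_eq_insert_Ico (by omega : 1 ≤ n + 1)).trans (by rw [Finset.Ico_add_one_right_eq_Icc])]
  rw [Finset.fold_insert (by simp)]

lemma Mn_rec (hσ0 : ∀ ω, 0 ≤ σ ω) (hD0 : ∀ ω, 0 ≤ D ω) (n : ℕ) (ω : Ω) :
    Mn (⇑θ.symm) σ D V τ (n + 1) (θ ω) = psi σ D V τ (Mn (⇑θ.symm) σ D V τ n ω) ω := by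
  induction n with
  | zero =>
      rw [Mn_succ, Mn_zero, Mn_zero, Sj_shift, Sj_zero, psi_eq]
      have h1 : σ ω + D ω + V ω - τ ω = σ ω + D ω + (V ω - τ ω) := by ring
      rw [h1]
      rw [max_eq_right (le_trans (by have := hσ0 ω; have := hD0 ω; linarith)
        (le_max_left (σ ω + D ω + (V ω - τ ω)) 0))]
  | succ n ih =>
      rw [Mn_succ, ih, Sj_shift, Mn_succ, psi_max]
      rw [psi_eq σ D V τ (Sj (⇑θ.symm) σ D V τ (n + 1) ω) ω]
      rw [max_assoc, max_eq_right (psi_ge σ D V τ _ ω)]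

end LoynesAux
/-- Lemma 3.1: if E[V − τ] < 0, the stationary equation Y ∘ θ = ψ(Y, ·)
has a P-a.s. finite nonnegative solution, unique up to P-a.s. equality, given by M_∞. -/
theorem loynes_existence_uniqueness
    [MeasurableSpace Ω] (P : Measure Ω) [IsProbabilityMeasure P]
    (θ : Ω ≃ᵐ Ω) (herg : Ergodic (⇑θ) P)
    (σ D V τ : Ω → ℝ)
    (hσm : Measurable σ) (hDm : Measurable D) (hVm : Measurable V) (hτm : Measurable τ)
    (hσ0 : ∀ ω, 0 ≤ σ ω) (hD0 : ∀ ω, 0 ≤ D ω) (hV0 : ∀ ω, 0 ≤ V ω) (hτ0 : ∀ ω, 0 ≤ τ ω)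
    (hσi : Integrable σ P) (hDi : Integrable D P) (hVi : Integrable V P) (hτi : Integrable τ P)
    (hτpos : ∀ᵐ ω ∂P, 0 < τ ω)
    (hEV : ∫ ω, (V ω - τ ω) ∂P < 0) :
    ∃ Y : Ω → ℝ, Measurable Y ∧ (∀ ω, 0 ≤ Y ω) ∧
      (∀ᵐ ω ∂P, Y (θ ω) = psi σ D V τ (Y ω) ω) ∧
      (∀ᵐ ω ∂P, ((Y ω : ℝ) : EReal) = Minf (⇑θ.symm) σ D V τ ω) ∧
      (∀ Yp : Ω → ℝ, Measurable Yp → (∀ ω, 0 ≤ Yp ω) →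
        (∀ᵐ ω ∂P, Yp (θ ω) = psi σ D V τ (Yp ω) ω) → Yp =ᵐ[P] Y) := by
  classical
  open LoynesAux in
  -- basic objects
  have hmp : MeasurePreserving (⇑θ) P P := herg.toMeasurePreserving
  have hmpT : MeasurePreserving (⇑θ.symm) P P := MeasurePreserving.symm θ hmp
  have hpeT : PreErgodic (⇑θ.symm) P := by
    constructor
    intro s hs hinv
    refine herg.toPreErgodic.aeconst_set hs ?_
    have h2 : ⇑θ ⁻¹' (⇑θ.symm ⁻¹' s) = s := by
      ext x; simp
    conv_lhs => rw [← hinv]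
    exact h2
  have hgm : Measurable (fun ω => V ω - τ ω) := hVm.sub hτm
  have hgi : Integrable (fun ω => V ω - τ ω) P := hVi.sub hτi
  -- composition with θ.symm preserves integrals and integrability
  have hcompI : ∀ {f : Ω → ℝ}, Integrable f P → Integrable (fun ω => f (θ.symm ω)) P := by
    intro f hf
    have hf' : Integrable f (Measure.map (⇑θ.symm) P) := by rwa [hmpT.map_eq]
    exact hf'.comp_measurable θ.symm.measurable
  have hcompE : ∀ (f : Ω → ℝ), Measurable f → ∫ ω, f (θ.symm ω) ∂P = ∫ ω, f ω ∂P := by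
    intro f hf
    conv_rhs => rw [← hmpT.map_eq]
    rw [integral_map θ.symm.measurable.aemeasurable hf.aestronglyMeasurable]
  -- the backward increments
  set q : Ω → ℝ := qf θ σ D V τ with hqdef
  have hqm : Measurable q := by
    unfold q
    unfold qf
    exact (((hσm.comp θ.symm.measurable).add (hDm.comp θ.symm.measurable)).sub
      (hσm.add hDm)).add ((hVm.comp θ.symm.measurable).sub (hτm.comp θ.symm.measurable))
  have hqi : Integrable q P := by
    unfold q
    unfold qf
    exact (((hcompI hσi).add (hcompI hDi)).sub (hσi.add hDi)).add
      ((hcompI hVi).sub (hcompI hτi))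
  have hI1 : Integrable (fun ω => σ (θ.symm ω) + D (θ.symm ω) - (σ ω + D ω)) P := by
    exact ((hcompI hσi).add (hcompI hDi)).sub (hσi.add hDi)
  have hI2 : Integrable (fun ω => V (θ.symm ω) - τ (θ.symm ω)) P := by
    exact (hcompI hVi).sub (hcompI hτi)
  have hI3 : Integrable (fun ω => σ (θ.symm ω) + D (θ.symm ω)) P := by
    exact (hcompI hσi).add (hcompI hDi)
  have hI4 : Integrable (fun ω => σ ω + D ω) P := by exact hσi.add hDi
  have hqint : ∫ ω, q ω ∂P = ∫ ω, (V ω - τ ω) ∂P := by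
    have hq_eq : ∀ ω, q ω = (σ (θ.symm ω) + D (θ.symm ω) - (σ ω + D ω))
        + (V (θ.symm ω) - τ (θ.symm ω)) := fun ω => rfl
    calc ∫ ω, q ω ∂P
        = ∫ ω, ((σ (θ.symm ω) + D (θ.symm ω) - (σ ω + D ω))
            + (V (θ.symm ω) - τ (θ.symm ω))) ∂P := by
          exact integral_congr_ae (Filter.Eventually.of_forall hq_eq)
      _ = (∫ ω, (σ (θ.symm ω) + D (θ.symm ω) - (σ ω + D ω)) ∂P)
            + ∫ ω, (V (θ.symm ω) - τ (θ.symm ω)) ∂P := integral_add hI1 hI2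
      _ = ((∫ ω, (σ (θ.symm ω) + D (θ.symm ω)) ∂P) - ∫ ω, (σ ω + D ω) ∂P)
            + ((∫ ω, V (θ.symm ω) ∂P) - ∫ ω, τ (θ.symm ω) ∂P) := by
          rw [integral_sub hI3 hI4, integral_sub (hcompI hVi) (hcompI hτi)]
      _ = ∫ ω, (V ω - τ ω) ∂P := by
          rw [hcompE (fun ω => σ ω + D ω) (hσm.add hDm), hcompE V hVm, hcompE τ hτm,
            integral_sub hVi hτi]
          ring
  -- a.e. boundedness of the S_j
  have hq_drift : ∀ᵐ ω ∂P, BddAbove (Set.range fun n : ℕ => auxS (⇑θ.symm) q n ω) :=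
    drift_bddAbove hmpT hpeT hqm hqi (by rw [hqint]; exact hEV)
  have E1 : ∀ᵐ ω ∂P, BddAbove (Set.range fun j : ℕ => Sj (⇑θ.symm) σ D V τ (j + 1) ω) := by
    filter_upwards [hq_drift] with ω hω
    obtain ⟨C, hC⟩ := hω
    refine ⟨σ ω + D ω + C, ?_⟩
    rintro _ ⟨j, rfl⟩
    show Sj (⇑θ.symm) σ D V τ (j + 1) ω ≤ σ ω + D ω + C
    rw [Sj_q σ D V τ θ]
    exact add_le_add_right (hC ⟨j + 1, rfl⟩) _
  -- Definition of Y
  set Y : Ω → ℝ := fun ω => (Minf (⇑θ.symm) σ D V τ ω).toReal with hYdef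
  have hMinfm : Measurable (Minf (⇑θ.symm) σ D V τ) := by
    unfold Minf
    exact Measurable.max measurable_const
      (Measurable.iSup fun j =>
        (Sj_meas σ D V τ hσm hDm hVm hτm θ.symm.measurable (j + 1)).coe_real_ereal)
  have hYm : Measurable Y := hMinfm.ereal_toReal
  have hY0 : ∀ ω, 0 ≤ Y ω := by
    intro ω
    refine ereal_toReal_nonneg ?_
    exact le_max_left _ _
  -- pointwise identification on the good set
  have hYr : ∀ ω, BddAbove (Set.range fun j : ℕ => Sj (⇑θ.symm) σ D V τ (j + 1) ω) →
      Y ω = max 0 (⨆ j : ℕ, Sj (⇑θ.symm) σ D V τ (j + 1) ω) ∧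
      ((Y ω : ℝ) : EReal) = Minf (⇑θ.symm) σ D V τ ω := by
    intro ω hb
    have h1 : Minf (⇑θ.symm) σ D V τ ω
        = (((max 0 (⨆ j : ℕ, Sj (⇑θ.symm) σ D V τ (j + 1) ω) : ℝ)) : EReal) := by
      unfold Minf
      rw [coe_ciSup hb, ereal_max_zero_coe]
    constructor
    · rw [hYdef]; simp only; rw [h1, EReal.toReal_coe]
    · rw [hYdef]; simp only; rw [h1, EReal.toReal_coe]
  -- the functional equation
  have hYeq : ∀ᵐ ω ∂P, Y (θ ω) = psi σ D V τ (Y ω) ω := by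
    filter_upwards [E1] with ω hb
    have hb0 : BddAbove (Set.range fun j : ℕ => Sj (⇑θ.symm) σ D V τ j ω) := bdd_of_shift hb
    have hbθ : BddAbove (Set.range fun j : ℕ => Sj (⇑θ.symm) σ D V τ (j + 1) (θ ω)) := by
      obtain ⟨C, hC⟩ := hb0
      refine ⟨C + (V ω - τ ω), ?_⟩
      rintro _ ⟨j, rfl⟩
      show Sj (⇑θ.symm) σ D V τ (j + 1) (θ ω) ≤ C + (V ω - τ ω)
      rw [Sj_shift]
      exact add_le_add_left (hC ⟨j, rfl⟩) _
    obtain ⟨hYω, -⟩ := hYr ω hb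
    obtain ⟨hYθω, -⟩ := hYr (θ ω) hbθ
    rw [hYω, hYθω]
    -- rewrite the sup at θ ω
    have h2 : (⨆ j : ℕ, Sj (⇑θ.symm) σ D V τ (j + 1) (θ ω))
        = (⨆ j : ℕ, Sj (⇑θ.symm) σ D V τ j ω) + (V ω - τ ω) := by
      rw [ciSup_add_const hb0]
      exact iSup_congr fun j => Sj_shift σ D V τ θ j ω
    have h3 : (⨆ j : ℕ, Sj (⇑θ.symm) σ D V τ j ω)
        = max (σ ω + D ω) (⨆ j : ℕ, Sj (⇑θ.symm) σ D V τ (j + 1) ω) := by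
      rw [ciSup_succ hb0, Sj_zero]
    rw [h2, h3, psi_eq]
    set r := ⨆ j : ℕ, Sj (⇑θ.symm) σ D V τ (j + 1) ω
    have h4 : σ ω + D ω + V ω - τ ω = (σ ω + D ω) + (V ω - τ ω) := by ring
    rw [h4]
    rw [← max_add_add_right]
    have h5 : (V ω - τ ω) ≤ (σ ω + D ω) + (V ω - τ ω) := by
      have := hσ0 ω; have := hD0 ω; linarith
    rw [← max_alg h5]
  refine ⟨Y, hYm, hY0, hYeq, ?_, ?_⟩
  · -- identification with Minf
    filter_upwards [E1] with ω hb
    exact (hYr ω hb).2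
  · -- uniqueness
    intro Yp hYpm hYp0 hYpeq
    -- step 1 : Mn ≤ Yp a.e., hence Y ≤ Yp a.e.
    have step1 : ∀ n : ℕ, ∀ᵐ ω ∂P, Mn (⇑θ.symm) σ D V τ n ω ≤ Yp ω := by
      intro n
      induction n with
      | zero =>
          filter_upwards with ω
          rw [Mn_zero]
          exact hYp0 ω
      | succ n ih =>
          have h1 : ∀ᵐ ω ∂P, Mn (⇑θ.symm) σ D V τ (n + 1) (θ ω) ≤ Yp (θ ω) := by
            filter_upwards [ih, hYpeq] with ω h1 h2
            rw [Mn_rec σ D V τ θ hσ0 hD0, h2]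
            exact psi_mono σ D V τ h1 ω
          have h2 := hmpT.quasiMeasurePreserving.ae h1
          filter_upwards [h2] with ω hω
          simpa using hω
    have hYleYp : ∀ᵐ ω ∂P, Y ω ≤ Yp ω := by
      filter_upwards [E1, ae_all_iff.2 step1] with ω hb h1
      rw [(hYr ω hb).1]
      refine max_le (hYp0 ω) (ciSup_le fun j => ?_)
      calc Sj (⇑θ.symm) σ D V τ (j + 1) ω ≤ Mn (⇑θ.symm) σ D V τ (j + 1) ω := by
            rw [Mn_succ]; exact le_max_left _ _
        _ ≤ Yp ω := h1 (j + 1)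
    -- step 2 : W := Yp − Y is a.e. θ-invariant, hence a.e. constant c ≥ 0
    set W : Ω → ℝ := fun ω => Yp ω - Y ω with hWdef
    have hWm : Measurable W := hYpm.sub hYm
    have hWdec : ∀ᵐ ω ∂P, W (θ ω) ≤ W ω := by
      filter_upwards [hYpeq, hYeq, hYleYp] with ω e1 e2 hle
      have h3 : Yp ω = Y ω + (Yp ω - Y ω) := by ring
      rw [h3] at e1
      have h4 := psi_add_le σ D V τ (sub_nonneg.2 hle) (Y ω) ω
      simp only [hWdef]
      rw [e1, e2]
      linarith
    have hWeq : ∀ᵐ ω ∂P, W (θ ω) = W ω := ae_comp_eq_of_ae_comp_le hmp hWm hWdec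
    obtain ⟨c, hc⟩ := herg.ae_eq_const_of_ae_eq_comp₀ hWm.nullMeasurable hWeq
    have hne : (ae P).NeBot := ae_neBot.2 (IsProbabilityMeasure.ne_zero P)
    have hW0 : ∀ᵐ ω ∂P, 0 ≤ W ω := by
      filter_upwards [hYleYp] with ω hω
      simp only [hWdef]
      linarith
    have hc0 : 0 ≤ c := by
      obtain ⟨ω, hω1, hω2⟩ := (hc.and hW0).exists
      rw [hω1] at hω2
      exact hω2
    rcases eq_or_lt_of_le hc0 with hc0' | hcpos
    · -- c = 0, conclude
      filter_upwards [hc] with ω hω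
      have h : Yp ω - Y ω = c := hω
      rw [← hc0'] at h
      linarith
    · -- c > 0 is impossible
      exfalso
      have hYp_eq : ∀ᵐ ω ∂P, Yp ω = Y ω + c := by
        filter_upwards [hc] with ω hω
        have : Yp ω - Y ω = c := hω
        linarith
      have hpθ : ∀ᵐ ω ∂P, Yp (θ ω) = Y (θ ω) + c := by
        have := hmp.quasiMeasurePreserving.ae hYp_eq
        filter_upwards [this] with ω hω
        exact hω
      have hlin : ∀ᵐ ω ∂P, Y (θ ω) = Y ω + (V ω - τ ω) := by
        filter_upwards [hYpeq, hYeq, hYp_eq, hpθ] with ω e1 e2 e3 e4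
        rw [psi_eq] at e1 e2
        rw [e3, e4] at e1
        set u := Y ω + (V ω - τ ω) with hu
        set v := max (σ ω + D ω + V ω - τ ω) 0 with hv
        have e1' : Y (θ ω) + c = max (u + c) v := by
          rw [e1]
          congr 1
          ring
        by_cases huv : v ≤ u
        · rw [e2]
          exact (max_eq_left huv).symm ▸ rfl
        · push_neg at huv
          exfalso
          rw [e2, max_eq_right huv.le] at e1'
          have h5 : max (u + c) v < v + c := max_lt (by linarith) (by linarith)
          linarith
      have hlin_orbit : ∀ n : ℕ, ∀ᵐ ω ∂P,
          Y ((⇑θ)^[n] ω) = Y ω + ∑ i ∈ Finset.range n, (V ((⇑θ)^[i] ω) - τ ((⇑θ)^[i] ω)) := by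
        intro n
        induction n with
        | zero => filter_upwards with ω; simp
        | succ n ih =>
            have hn := (hmp.iterate n).quasiMeasurePreserving.ae hlin
            filter_upwards [ih, hn] with ω h1 h2
            rw [Function.iterate_succ_apply', h2, h1, Finset.sum_range_succ]
            ring
      -- forward drift
      set ε : ℝ := -(∫ ω, (V ω - τ ω) ∂P) / 2 with hεdef
      have hε : 0 < ε := by unfold ε; linarith
      have hgεi : Integrable (fun ω => (V ω - τ ω) + ε) P := hgi.add (integrable_const ε)
      have hgεm : Measurable (fun ω => (V ω - τ ω) + ε) := hgm.add measurable_const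
      have hgεint : ∫ ω, ((V ω - τ ω) + ε) ∂P < 0 := by
        rw [integral_add hgi (integrable_const ε), integral_const]
        simp only [probReal_univ, smul_eq_mul, one_mul]
        unfold ε
        linarith
      have hfwd := drift_bddAbove hmp herg.toPreErgodic hgεm hgεi hgεint
      obtain ⟨ω, horb, hbdd⟩ := ((ae_all_iff.2 hlin_orbit).and hfwd).exists
      obtain ⟨C, hC⟩ := hbdd
      have hsum : ∀ n : ℕ,
          ∑ i ∈ Finset.range n, (V ((⇑θ)^[i] ω) - τ ((⇑θ)^[i] ω)) ≤ C - n * ε := by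
        intro n
        have h6 : auxS (⇑θ) (fun ω => (V ω - τ ω) + ε) n ω ≤ C := hC ⟨n, rfl⟩
        have h7 : auxS (⇑θ) (fun ω => (V ω - τ ω) + ε) n ω
            = (∑ i ∈ Finset.range n, (V ((⇑θ)^[i] ω) - τ ((⇑θ)^[i] ω))) + n * ε := by
          unfold auxS
          rw [Finset.sum_add_distrib, Finset.sum_const, Finset.card_range]
          simp [nsmul_eq_mul]
        linarith [h7 ▸ h6]
      obtain ⟨n, hn⟩ := exists_nat_gt ((C + Y ω) / ε)
      have h8 : C + Y ω < n * ε := by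
        rw [div_lt_iff₀ hε] at hn
        linarith
      have h9 := horb n
      have h10 := hsum n
      have h11 := hY0 ((⇑θ)^[n] ω)
      linarith
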